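/- (Quantum Neyman–Pearson Lemma) Let ν, ω be positive definite matrices on a finite dimensional Hilbert space, viewed as positive linear functionals A ↦ Tr(νA), Tr(ωA). Then the minimal error D(ν,ω) = inf over orthogonal projections T of [Tr(νT) + Tr(ω(1−T))] is attained at T = s_{(ω−ν)_+}, the support projection of the positive part of ω−ν, and equals (1/2)(Tr ω + Tr ν − Tr|ω−ν|). -/

import Mathlib

open scoped ComplexOrder

/-- Functional calculus for Hermitian matrices (junk value `0` off the Hermitian matrices). -/
noncomputable def cfcM {d : ℕ} (f : ℝ → ℝ) (A : Matrix (Fin d) (Fin d) ℂ) :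
    Matrix (Fin d) (Fin d) ℂ :=
  if h : A.IsHermitian then
    (h.eigenvectorUnitary : Matrix (Fin d) (Fin d) ℂ) *
      Matrix.diagonal (fun i => (f (h.eigenvalues i) : ℂ)) *
      (star (h.eigenvectorUnitary : Matrix (Fin d) (Fin d) ℂ))
  else 0

/-- Absolute value of a Hermitian matrix via functional calculus. -/
noncomputable def matAbs {d : ℕ} (A : Matrix (Fin d) (Fin d) ℂ) :
    Matrix (Fin d) (Fin d) ℂ := cfcM (fun x => |x|) A

/-- Support projection of the positive part of a Hermitian matrix. -/
noncomputable def suppPosM {d : ℕ} (A : Matrix (Fin d) (Fin d) ℂ) :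
    Matrix (Fin d) (Fin d) ℂ := cfcM (fun x => if 0 < x then 1 else 0) A

/-- Total error probability of the test `T` for the pair `(ν, ω)`:
`D(ν,ω,T) = Tr(νT) + Tr(ω(1−T))`. -/
noncomputable def testErr {d : ℕ} (ν ω T : Matrix (Fin d) (Fin d) ℂ) : ℝ :=
  ((ν * T).trace + (ω * (1 - T)).trace).re

open Matrix in
lemma spectral_theorem_mul {d : ℕ} {A : Matrix (Fin d) (Fin d) ℂ} (h : A.IsHermitian) :
    A = (h.eigenvectorUnitary : Matrix (Fin d) (Fin d) ℂ) *
      Matrix.diagonal (RCLike.ofReal ∘ h.eigenvalues) *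
      star (h.eigenvectorUnitary : Matrix (Fin d) (Fin d) ℂ) := h.spectral_theorem

open Matrix in
lemma cfcM_of_isHermitian {d : ℕ} (f : ℝ → ℝ) {A : Matrix (Fin d) (Fin d) ℂ}
    (h : A.IsHermitian) :
    cfcM f A = (h.eigenvectorUnitary : Matrix (Fin d) (Fin d) ℂ) *
      Matrix.diagonal (fun i => (f (h.eigenvalues i) : ℂ)) *
      (star (h.eigenvectorUnitary : Matrix (Fin d) (Fin d) ℂ)) := dif_pos h

open Matrix in
lemma trace_cfcM {d : ℕ} (f : ℝ → ℝ) {A : Matrix (Fin d) (Fin d) ℂ}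
    (h : A.IsHermitian) :
    (cfcM f A).trace = ∑ i, (f (h.eigenvalues i) : ℂ) := by
  rw [cfcM_of_isHermitian f h, trace_mul_cycle,
    (Matrix.mem_unitaryGroup_iff').mp h.eigenvectorUnitary.2, one_mul, trace_diagonal]

open Matrix in
lemma mul_cfcM {d : ℕ} (f : ℝ → ℝ) {A : Matrix (Fin d) (Fin d) ℂ}
    (h : A.IsHermitian) :
    A * cfcM f A = cfcM (fun x => x * f x) A := by
  rw [cfcM_of_isHermitian f h, cfcM_of_isHermitian _ h]
  set U : Matrix (Fin d) (Fin d) ℂ := (h.eigenvectorUnitary : Matrix (Fin d) (Fin d) ℂ)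
    with hUdef
  have hU : star U * U = 1 := (Matrix.mem_unitaryGroup_iff').mp h.eigenvectorUnitary.2
  have e0 : A * (U * Matrix.diagonal (fun i => (f (h.eigenvalues i) : ℂ)) * star U)
      = (U * Matrix.diagonal (RCLike.ofReal ∘ h.eigenvalues) * star U) *
        (U * Matrix.diagonal (fun i => (f (h.eigenvalues i) : ℂ)) * star U) := by
    rw [← spectral_theorem_mul h]
  rw [e0]
  calc (U * Matrix.diagonal (RCLike.ofReal ∘ h.eigenvalues) * star U) *
        (U * Matrix.diagonal (fun i => (f (h.eigenvalues i) : ℂ)) * star U)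
      = U * (Matrix.diagonal (RCLike.ofReal ∘ h.eigenvalues) * (star U * U) *
          Matrix.diagonal (fun i => (f (h.eigenvalues i) : ℂ))) * star U := by
        simp only [Matrix.mul_assoc]
    _ = _ := by
        rw [hU, mul_one, Matrix.diagonal_mul_diagonal]
        congr 2
        ext i
        simp [Complex.ofReal_mul]

open Matrix in
lemma testErr_eq {d : ℕ} (ν ω T : Matrix (Fin d) (Fin d) ℂ) :
    testErr ν ω T = (ω.trace).re - (((ω - ν) * T).trace).re := by
  unfold testErr
  rw [Matrix.mul_sub, Matrix.mul_one, Matrix.sub_mul, Matrix.trace_sub, Matrix.trace_sub]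
  simp [Complex.add_re, Complex.sub_re]
  ring

open Matrix in
/-- Diagonal entries of a Hermitian idempotent have nonnegative real part. -/
lemma proj_diag_re_nonneg {d : ℕ} {S : Matrix (Fin d) (Fin d) ℂ}
    (hS : S.IsHermitian) (h2 : S * S = S) (i : Fin d) : 0 ≤ (S i i).re := by
  have : S i i = ∑ j, ((Complex.normSq (S i j) : ℝ) : ℂ) := by
    conv_lhs => rw [← h2]
    rw [Matrix.mul_apply]
    refine Finset.sum_congr rfl fun j _ => ?_
    have hji : S j i = star (S i j) := by
      conv_lhs => rw [← hS.eq]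
      rw [Matrix.conjTranspose_apply]
    rw [hji, Complex.star_def, Complex.mul_conj]
  rw [this]
  rw [Complex.re_sum]
  exact Finset.sum_nonneg fun j _ => by
    simpa using Complex.normSq_nonneg (S i j)

open Matrix in
lemma proj_diag_re_le_one {d : ℕ} {S : Matrix (Fin d) (Fin d) ℂ}
    (hS : S.IsHermitian) (h2 : S * S = S) (i : Fin d) : (S i i).re ≤ 1 := by
  have hS' : (1 - S).IsHermitian := (Matrix.isHermitian_one).sub hS
  have h2' : (1 - S) * (1 - S) = 1 - S := by
    rw [Matrix.sub_mul, Matrix.mul_sub, Matrix.mul_sub, h2]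
    simp
  have := proj_diag_re_nonneg hS' h2' i
  simp only [Matrix.sub_apply, Matrix.one_apply_eq, Complex.sub_re, Complex.one_re] at this
  linarith

lemma max_eq_half {x : ℝ} : max x 0 = (x + |x|) / 2 := by
  rcases le_total 0 x with h | h
  · rw [abs_of_nonneg h, max_eq_left h]; ring
  · rw [abs_of_nonpos h, max_eq_right h]; ring

open Matrix in
lemma trace_self_of_isHermitian {d : ℕ} {A : Matrix (Fin d) (Fin d) ℂ}
    (h : A.IsHermitian) : A.trace = ∑ i, ((h.eigenvalues i : ℝ) : ℂ) := by
  conv_lhs => rw [spectral_theorem_mul h]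
  rw [trace_mul_cycle, (Matrix.mem_unitaryGroup_iff').mp h.eigenvectorUnitary.2, one_mul,
    trace_diagonal]
  rfl

open Matrix in
/-- Key inequality: for a Hermitian idempotent `T`,
`Re Tr(A T) ≤ ∑ max (λ_i(A)) 0` for Hermitian `A`. -/
lemma re_trace_mul_proj_le {d : ℕ} {A T : Matrix (Fin d) (Fin d) ℂ}
    (h : A.IsHermitian) (hT : T.IsHermitian) (hT2 : T * T = T) :
    ((A * T).trace).re ≤ ∑ i, max (h.eigenvalues i) 0 := by
  set U : Matrix (Fin d) (Fin d) ℂ := (h.eigenvectorUnitary : Matrix (Fin d) (Fin d) ℂ) with hUdef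
  have hU : star U * U = 1 := (Matrix.mem_unitaryGroup_iff').mp h.eigenvectorUnitary.2
  have hU' : U * star U = 1 := (Matrix.mem_unitaryGroup_iff).mp h.eigenvectorUnitary.2
  set S : Matrix (Fin d) (Fin d) ℂ := star U * T * U with hSdef
  have hS : S.IsHermitian := by
    rw [hSdef]
    simp only [Matrix.IsHermitian, Matrix.star_eq_conjTranspose, Matrix.conjTranspose_mul,
      Matrix.conjTranspose_conjTranspose, hT.eq, Matrix.mul_assoc]
  have hS2 : S * S = S := by
    rw [hSdef]
    calc star U * T * U * (star U * T * U) = star U * (T * (U * star U) * T) * U := by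
          simp only [Matrix.mul_assoc]
      _ = star U * T * U := by rw [hU', Matrix.mul_one, hT2, Matrix.mul_assoc]
  have key : (A * T).trace = (Matrix.diagonal (fun i => ((h.eigenvalues i : ℝ) : ℂ)) * S).trace := by
    have e0 : A * T
        = (U * Matrix.diagonal (fun i => ((h.eigenvalues i : ℝ) : ℂ)) * star U) * T := by
      rw [show Matrix.diagonal (fun i => ((h.eigenvalues i : ℝ) : ℂ))
          = Matrix.diagonal (RCLike.ofReal ∘ h.eigenvalues) from rfl, hUdef,
        ← spectral_theorem_mul h]
    rw [e0]
    have e1 : (U * Matrix.diagonal (fun i => ((h.eigenvalues i : ℝ) : ℂ)) * star U) * T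
        = U * (Matrix.diagonal (fun i => ((h.eigenvalues i : ℝ) : ℂ)) * (star U * T)) := by
      simp only [Matrix.mul_assoc]
    rw [e1, Matrix.trace_mul_comm]
    congr 1
    simp only [hSdef, Matrix.mul_assoc]
  have diag_trace : (Matrix.diagonal (fun i => ((h.eigenvalues i : ℝ) : ℂ)) * S).trace
      = ∑ i, ((h.eigenvalues i : ℝ) : ℂ) * S i i := by
    unfold Matrix.trace
    refine Finset.sum_congr rfl fun i _ => ?_
    simp [Matrix.diag, Matrix.mul_apply, Matrix.diagonal_apply, Finset.sum_ite_eq]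
  rw [key, diag_trace, Complex.re_sum]
  refine Finset.sum_le_sum fun i _ => ?_
  rw [Complex.re_ofReal_mul]
  rcases le_or_gt (h.eigenvalues i) 0 with hle | hlt
  · have : h.eigenvalues i * (S i i).re ≤ 0 :=
      mul_nonpos_of_nonpos_of_nonneg hle (proj_diag_re_nonneg hS hS2 i)
    exact this.trans (le_max_right _ _)
  · have : h.eigenvalues i * (S i i).re ≤ h.eigenvalues i * 1 :=
      mul_le_mul_of_nonneg_left (proj_diag_re_le_one hS hS2 i) hlt.le
    rw [mul_one] at this
    exact this.trans (le_max_left _ _)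

/-- Quantum Neyman–Pearson Lemma: the minimal error `inf_T [Tr(νT) + Tr(ω(1−T))]` over
orthogonal projections `T` is attained at `T = s_{(ω−ν)_+}` and equals
`(1/2)(Tr ω + Tr ν − Tr|ω−ν|)`. -/
theorem quantum_neyman_pearson {d : ℕ}
    (ν ω : Matrix (Fin d) (Fin d) ℂ) (hν : ν.PosDef) (hω : ω.PosDef) :
    (∀ T : Matrix (Fin d) (Fin d) ℂ, T.IsHermitian → T * T = T →
        (1 / 2 : ℝ) * ((ω.trace).re + (ν.trace).re - ((matAbs (ω - ν)).trace).re)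
          ≤ testErr ν ω T) ∧
    testErr ν ω (suppPosM (ω - ν))
      = (1 / 2 : ℝ) * ((ω.trace).re + (ν.trace).re - ((matAbs (ω - ν)).trace).re) := by
  have hΔ : (ω - ν).IsHermitian := hω.1.sub hν.1
  set lam : Fin d → ℝ := hΔ.eigenvalues with hlam
  -- trace of |Δ|
  have habs : ((matAbs (ω - ν)).trace).re = ∑ i, |lam i| := by
    unfold matAbs
    rw [trace_cfcM _ hΔ, Complex.re_sum]
    exact Finset.sum_congr rfl fun i _ => Complex.ofReal_re _
  -- trace of Δ
  have htr : ((ω - ν).trace).re = ∑ i, lam i := by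
    rw [trace_self_of_isHermitian hΔ, Complex.re_sum]
    exact Finset.sum_congr rfl fun i _ => Complex.ofReal_re _
  have htr' : ((ω - ν).trace).re = (ω.trace).re - (ν.trace).re := by
    rw [Matrix.trace_sub, Complex.sub_re]
  have hsum : ∑ i, max (lam i) 0 = ((∑ i, lam i) + ∑ i, |lam i|) / 2 := by
    rw [← Finset.sum_add_distrib, Finset.sum_div]
    exact Finset.sum_congr rfl fun i _ => max_eq_half
  constructor
  · intro T hT hT2
    have key := re_trace_mul_proj_le hΔ hT hT2
    rw [testErr_eq]
    rw [hsum] at key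
    have h1 : ∑ i, lam i = (ω.trace).re - (ν.trace).re := by rw [← htr, htr']
    rw [habs]
    linarith
  · rw [testErr_eq]
    have hmul : (ω - ν) * suppPosM (ω - ν)
        = cfcM (fun x => x * (if 0 < x then 1 else 0)) (ω - ν) := mul_cfcM _ hΔ
    have : (((ω - ν) * suppPosM (ω - ν)).trace).re = ∑ i, max (lam i) 0 := by
      rw [hmul, trace_cfcM _ hΔ, Complex.re_sum]
      refine Finset.sum_congr rfl fun i _ => ?_
      rw [Complex.ofReal_re]
      rcases lt_or_ge 0 (lam i) with h | h
      · rw [if_pos h, mul_one, max_eq_left h.le]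
      · rw [if_neg (not_lt.mpr h), mul_zero, max_eq_right h]
    rw [this, hsum, habs]
    have h1 : ∑ i, lam i = (ω.trace).re - (ν.trace).re := by rw [← htr, htr']
    linarith
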